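/- Let V be a finite-dimensional real inner product space, A a symmetric endomorphism of V with ‖A‖² := Tr(A∘A), and S a skew-symmetric endomorphism of V with ρ = −Tr(S²). Then −Tr(A²∘S²) ≤ ‖A‖²·ρ. -/
import Mathlib

open scoped InnerProductSpace

private lemma trace_eq_sum_inner' {V : Type*} [NormedAddCommGroup V] [InnerProductSpace ℝ V]
    [FiniteDimensional ℝ V] (b : OrthonormalBasis (Fin (Module.finrank ℝ V)) ℝ V)
    (T : V →ₗ[ℝ] V) :
    LinearMap.trace ℝ V T = ∑ i, ⟪b i, T (b i)⟫_ℝ := by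
  rw [LinearMap.trace_eq_matrix_trace ℝ b.toBasis, Matrix.trace]
  simp [Matrix.diag, LinearMap.toMatrix_apply, b.coe_toBasis_repr_apply,
    b.repr_apply_apply, b.coe_toBasis]

theorem stmt_6 {V : Type*} [NormedAddCommGroup V] [InnerProductSpace ℝ V]
    [FiniteDimensional ℝ V] (A S : V →ₗ[ℝ] V)
    (hA : LinearMap.IsSymmetric A) (hS : LinearMap.adjoint S = -S) :
    -(LinearMap.trace ℝ V ((A ∘ₗ A) ∘ₗ (S ∘ₗ S))) ≤
      LinearMap.trace ℝ V (A ∘ₗ A) * (-(LinearMap.trace ℝ V (S ∘ₗ S))) := by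
  set b := stdOrthonormalBasis ℝ V with hb
  have hSkew : ∀ x y : V, ⟪S x, y⟫_ℝ = -⟪x, S y⟫_ℝ := by
    intro x y
    have h := LinearMap.adjoint_inner_left S y x
    rw [hS] at h
    simp only [LinearMap.neg_apply, inner_neg_left] at h
    linarith
  -- rewrite the three traces
  have h1 : -(LinearMap.trace ℝ V ((A ∘ₗ A) ∘ₗ (S ∘ₗ S))) = ∑ i, ‖A (S (b i))‖ ^ 2 := by
    have hcyc : LinearMap.trace ℝ V ((A ∘ₗ A) ∘ₗ (S ∘ₗ S)) =
        LinearMap.trace ℝ V (S ∘ₗ ((A ∘ₗ A) ∘ₗ S)) := by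
      have := LinearMap.trace_mul_comm ℝ ((A ∘ₗ A) ∘ₗ S) S
      simpa [Module.End.mul_eq_comp, LinearMap.comp_assoc] using this
    rw [hcyc, trace_eq_sum_inner' b, ← Finset.sum_neg_distrib]
    refine Finset.sum_congr rfl fun i _ => ?_
    have e1 : ⟪b i, S (A (A (S (b i))))⟫_ℝ = -⟪S (b i), A (A (S (b i)))⟫_ℝ := by
      have := hSkew (b i) (A (A (S (b i))))
      linarith
    rw [LinearMap.comp_apply, LinearMap.comp_apply, LinearMap.comp_apply, e1, neg_neg,
      ← hA (S (b i)) (A (S (b i))) , real_inner_self_eq_norm_sq]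
  have h2 : LinearMap.trace ℝ V (A ∘ₗ A) = ∑ i, ‖A (b i)‖ ^ 2 := by
    rw [trace_eq_sum_inner' b]
    refine Finset.sum_congr rfl fun i _ => ?_
    rw [LinearMap.comp_apply, ← hA (b i) (A (b i)), real_inner_self_eq_norm_sq]
  have h3 : -(LinearMap.trace ℝ V (S ∘ₗ S)) = ∑ i, ‖S (b i)‖ ^ 2 := by
    rw [trace_eq_sum_inner' b, ← Finset.sum_neg_distrib]
    refine Finset.sum_congr rfl fun i _ => ?_
    rw [LinearMap.comp_apply, ← neg_neg (⟪b i, S (S (b i))⟫_ℝ), ← hSkew,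
      real_inner_self_eq_norm_sq, neg_neg]
  rw [h1, h2, h3]
  -- key pointwise bound
  have key : ∀ x : V, ‖A x‖ ^ 2 ≤ (∑ i, ‖A (b i)‖ ^ 2) * ‖x‖ ^ 2 := by
    intro x
    have expand : ‖A x‖ ^ 2 = ∑ i, ⟪A (b i), x⟫_ℝ ^ 2 := by
      rw [← real_inner_self_eq_norm_sq, ← OrthonormalBasis.sum_inner_mul_inner b (A x) (A x)]
      refine Finset.sum_congr rfl fun i _ => ?_
      rw [sq, real_inner_comm (A x) (b i), hA, real_inner_comm x (A (b i))]
    rw [expand, Finset.sum_mul]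
    refine Finset.sum_le_sum fun i _ => ?_
    have hcs := abs_real_inner_le_norm (A (b i)) x
    calc ⟪A (b i), x⟫_ℝ ^ 2 = |⟪A (b i), x⟫_ℝ| ^ 2 := (sq_abs _).symm
      _ ≤ (‖A (b i)‖ * ‖x‖) ^ 2 := by
          exact pow_le_pow_left₀ (abs_nonneg _) hcs 2
      _ = ‖A (b i)‖ ^ 2 * ‖x‖ ^ 2 := by ring
  calc ∑ i, ‖A (S (b i))‖ ^ 2 ≤ ∑ i, (∑ j, ‖A (b j)‖ ^ 2) * ‖S (b i)‖ ^ 2 :=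
        Finset.sum_le_sum fun i _ => key (S (b i))
    _ = (∑ j, ‖A (b j)‖ ^ 2) * ∑ i, ‖S (b i)‖ ^ 2 := by rw [Finset.mul_sum]
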